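/- arXiv:1307.5724 — 9 statements merged into one kernel-verified Lean document; each statement's English description precedes it below -/
import Mathlib

section
/- Let C be a finite elementary abelian p-group acting on a k-vector space V' = V_1 ⊕ ⋯ ⊕ V_r, acting on each V_i by scalar multiplication via a character χ_i : C → k^*. If the action of C on V' is faithful and no proper subsum of the V_i is a faithful C-module, then χ_1, …, χ_r form an F_p-basis of the dual group Hom(C, k^*). -/
theorem stmt1_aux (p : ℕ) [Fact p.Prime] (k : Type*) [Field k] (u : kˣ)
    (hu : IsPrimitiveRoot u p)
    (C : Type*) [CommGroup C] [Finite C] [Module (ZMod p) (Additive C)] (hC : ∀ c : C, c ^ p = 1)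
    (r : ℕ) (χ : Fin r → (C →* kˣ))
    (hfaith : ∀ c : C, (∀ i, χ i c = 1) → c = 1)
    (hmin : ∀ s : Finset (Fin r), s ≠ Finset.univ →
      ∃ c : C, c ≠ 1 ∧ ∀ i ∈ s, χ i c = 1) :
    (∀ a : Fin r → ZMod p, (∏ i, χ i ^ (a i).val) = 1 → a = 0) ∧
    (∀ ψ : C →* kˣ, ∃ a : Fin r → ZMod p, ψ = ∏ i, χ i ^ (a i).val) := by
  classical
  have hp : p.Prime := Fact.out
  have hp0 : 0 < p := hp.pos
  haveI : NeZero p := ⟨hp.ne_zero⟩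
  have hup : u ^ p = 1 := hu.pow_eq_one
  -- key power lemma
  have upow : ∀ n : ℕ, u ^ (n : ZMod p).val = u ^ n := by
    intro n
    conv_rhs => rw [← Nat.mod_add_div n p, pow_add, pow_mul, hup, one_pow, mul_one]
    rw [ZMod.val_natCast]
  have natc : ∀ x : ZMod p, ((x.val : ℕ) : ZMod p) = x := fun x => by
    simp [ZMod.natCast_val, ZMod.cast_id]
  have upow_add : ∀ x y : ZMod p, u ^ (x + y).val = u ^ x.val * u ^ y.val := by
    intro x y
    rw [show (x + y) = ((x.val + y.val : ℕ) : ZMod p) by push_cast [natc]; ring,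
      upow, pow_add]
  have upow_mul : ∀ x y : ZMod p, u ^ (x * y).val = (u ^ y.val) ^ x.val := by
    intro x y
    rw [show (x * y) = ((x.val * y.val : ℕ) : ZMod p) by push_cast [natc]; ring,
      upow, mul_comm, pow_mul]
  have upow_inj : ∀ x y : ZMod p, u ^ x.val = u ^ y.val → x = y := by
    intro x y h
    exact ZMod.val_injective p (hu.pow_inj (ZMod.val_lt x) (ZMod.val_lt y) h)
  have upow_sum : ∀ (s : Finset (Fin r)) (t : Fin r → ZMod p),
      u ^ (∑ i ∈ s, t i).val = ∏ i ∈ s, u ^ (t i).val := by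
    intro s t
    induction s using Finset.induction_on with
    | empty => simp
    | insert _ _ h ih => rw [Finset.sum_insert h, Finset.prod_insert h, upow_add, ih]
  -- every value of a character is a power of u; logarithm
  have exlog : ∀ (ψ : C →* kˣ) (c : C), ∃ x : ZMod p, ψ c = u ^ x.val := by
    intro ψ c
    have h1 : ((ψ c : kˣ) : k) ^ p = 1 := by
      rw [← Units.val_pow_eq_pow_val, ← map_pow, hC, map_one, Units.val_one]
    obtain ⟨i, hi, hiu⟩ := ((IsPrimitiveRoot.coe_units_iff).mpr hu).eq_pow_of_pow_eq_one h1
    refine ⟨(i : ZMod p), ?_⟩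
    rw [upow]
    exact Units.ext (by rw [Units.val_pow_eq_pow_val, hiu])
  set f : (C →* kˣ) → C → ZMod p := fun ψ c => (exlog ψ c).choose with hf
  have hfspec : ∀ (ψ : C →* kˣ) (c : C), ψ c = u ^ (f ψ c).val :=
    fun ψ c => (exlog ψ c).choose_spec
  -- smul on Additive C is determined
  have smul_eq : ∀ (a : ZMod p) (x : Additive C), (a • x).toMul = x.toMul ^ a.val := by
    intro a x
    rw [show a • x = ((a.val : ℕ) : ZMod p) • x by rw [natc], Nat.cast_smul_eq_nsmul,
      toMul_nsmul]
  -- f ψ is additive and ZMod p-linear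
  have fadd : ∀ (ψ : C →* kˣ) (c d : C), f ψ (c * d) = f ψ c + f ψ d := by
    intro ψ c d
    apply upow_inj
    rw [upow_add, ← hfspec, ← hfspec, ← hfspec, map_mul]
  have fsmul : ∀ (ψ : C →* kˣ) (a : ZMod p) (c : C), f ψ (c ^ a.val) = a * f ψ c := by
    intro ψ a c
    apply upow_inj
    rw [upow_mul, ← hfspec, map_pow, hfspec ψ c]
  set F : (C →* kˣ) → (Additive C →ₗ[ZMod p] ZMod p) := fun ψ =>
    { toFun := fun x => f ψ x.toMul
      map_add' := fun x y => fadd ψ x.toMul y.toMul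
      map_smul' := by
        intro a x
        simp only [RingHom.id_apply, smul_eq_mul]
        rw [← fsmul ψ a x.toMul]
        congr 1
        exact smul_eq a x } with hF
  have hFval : ∀ (ψ : C →* kˣ) (c : C), ψ c = u ^ (F ψ (Additive.ofMul c)).val :=
    fun ψ c => hfspec ψ c
  have hFone : ∀ (ψ : C →* kˣ) (c : C), F ψ (Additive.ofMul c) = 0 ↔ ψ c = 1 := by
    intro ψ c
    constructor
    · intro h; rw [hFval ψ c, h, ZMod.val_zero, pow_zero]
    · intro h
      apply upow_inj
      rw [← hFval, h, ZMod.val_zero, pow_zero]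
  -- the product of powers of characters evaluates via the linear combination
  have prod_eval : ∀ (a : Fin r → ZMod p) (c : C),
      (∏ i, χ i ^ (a i).val) c
        = u ^ (∑ i, a i * F (χ i) (Additive.ofMul c)).val := by
    intro a c
    have h1 : (∏ i, χ i ^ (a i).val) c = ∏ i, (χ i c) ^ (a i).val := by
      simp
    rw [h1, upow_sum]
    refine Finset.prod_congr rfl (fun i _ => ?_)
    rw [upow_mul, ← hFval]
  -- linear independence of the functionals
  have hindep : LinearIndependent (ZMod p) (fun i => F (χ i)) := by
    rw [Fintype.linearIndependent_iff]
    intro a ha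
    by_contra hne
    push_neg at hne
    obtain ⟨j, hj⟩ := hne
    obtain ⟨c, hc1, hc⟩ := hmin (Finset.univ.erase j)
      (Finset.erase_ne_self.mpr (Finset.mem_univ j))
    have hzero : ∀ i : Fin r, i ≠ j → F (χ i) (Additive.ofMul c) = 0 := by
      intro i hi
      exact (hFone (χ i) c).mpr (hc i (Finset.mem_erase.mpr ⟨hi, Finset.mem_univ i⟩))
    have heval := LinearMap.congr_fun ha (Additive.ofMul c)
    simp only [LinearMap.coe_sum, Finset.sum_apply, LinearMap.smul_apply,
      smul_eq_mul, LinearMap.zero_apply] at heval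
    rw [Finset.sum_eq_single_of_mem (s := Finset.univ)
      (f := fun i => a i * F (χ i) (Additive.ofMul c))
      j (Finset.mem_univ j) (fun i _ hi => by simp only [hzero i hi, mul_zero])] at heval
    have hFj : F (χ j) (Additive.ofMul c) = 0 := by
      rcases mul_eq_zero.mp heval with h | h
      · exact absurd h hj
      · exact h
    apply hc1
    apply hfaith
    intro i
    by_cases hij : i = j
    · subst hij; exact (hFone (χ i) c).mp hFj
    · exact hc i (Finset.mem_erase.mpr ⟨hij, Finset.mem_univ i⟩)
  haveI : Module.Finite (ZMod p) (Additive C) := Module.Finite.of_finite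
  constructor
  · -- part 1: independence statement
    intro a ha
    rw [Fintype.linearIndependent_iff] at hindep
    funext i
    refine hindep a ?_ i
    apply LinearMap.ext
    intro x
    have h2 := DFunLike.congr_fun ha x.toMul
    rw [prod_eval a x.toMul, MonoidHom.one_apply] at h2
    have h0 : (∑ i, a i * F (χ i) (Additive.ofMul x.toMul)) = 0 := by
      apply upow_inj
      rw [h2, ZMod.val_zero, pow_zero]
    simpa using h0
  · -- part 2: spanning
    intro ψ
    have hinj : Function.Injective
        (LinearMap.pi (fun i => F (χ i)) : Additive C →ₗ[ZMod p] (Fin r → ZMod p)) := by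
      rw [← LinearMap.ker_eq_bot, eq_bot_iff]
      intro x hx
      simp only [LinearMap.mem_ker, LinearMap.pi_apply] at hx
      have hx1 : x.toMul = 1 :=
        hfaith x.toMul (fun i => (hFone (χ i) x.toMul).mp (congrFun hx i))
      simpa [Submodule.mem_bot] using hx1
    have h1 : Module.finrank (ZMod p) (Additive C) ≤ r := by
      have := LinearMap.finrank_le_finrank_of_injective hinj
      simpa using this
    have h2 : r ≤ Module.finrank (ZMod p) (Module.Dual (ZMod p) (Additive C)) := by
      have := hindep.fintype_card_le_finrank
      simpa using this
    have hcard : Fintype.card (Fin r) =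
        Module.finrank (ZMod p) (Module.Dual (ZMod p) (Additive C)) := by
      rw [Fintype.card_fin]
      refine le_antisymm h2 ?_
      rw [Subspace.dual_finrank_eq]
      exact h1
    have hspan := hindep.span_eq_top_of_card_eq_finrank' hcard
    have hmem : F ψ ∈ Submodule.span (ZMod p) (Set.range (fun i => F (χ i))) := by
      rw [hspan]; trivial
    rw [Submodule.mem_span_range_iff_exists_fun] at hmem
    obtain ⟨a, hacf⟩ := hmem
    refine ⟨a, ?_⟩
    ext c
    rw [prod_eval, hFval ψ c]
    congr 1
    have h3 := LinearMap.congr_fun hacf (Additive.ofMul c)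
    simp only [LinearMap.coe_sum, Finset.sum_apply, LinearMap.smul_apply, smul_eq_mul] at h3
    rw [h3]

/-- The characters through which an elementary abelian `p`-group acts on the summands of a
minimal faithful module form an `F_p`-basis of the dual group `Hom(C, kˣ)`. -/
theorem stmt1 (p : ℕ) [Fact p.Prime] (k : Type*) [Field k] (ζ : k)
    (hζ : IsPrimitiveRoot ζ p)
    (C : Type*) [CommGroup C] [Finite C] (hC : ∀ c : C, c ^ p = 1)
    (r : ℕ) (χ : Fin r → (C →* kˣ))
    (hfaith : ∀ c : C, (∀ i, χ i c = 1) → c = 1)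
    (hmin : ∀ s : Finset (Fin r), s ≠ Finset.univ →
      ∃ c : C, c ≠ 1 ∧ ∀ i ∈ s, χ i c = 1) :
    (∀ a : Fin r → ZMod p, (∏ i, χ i ^ (a i).val) = 1 → a = 0) ∧
    (∀ ψ : C →* kˣ, ∃ a : Fin r → ZMod p, ψ = ∏ i, χ i ^ (a i).val) := by
  have hp : p.Prime := Fact.out
  letI : Module (ZMod p) (Additive C) :=
    AddCommGroup.zmodModule (n := p) (by intro x; exact hC x.toMul)
  exact stmt1_aux p k _ (hζ.isUnit_unit hp.ne_zero) C hC r χ hfaith hmin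
end

section
/- Let G be a finite group acting linearly and faithfully on a vector space V over a field k of characteristic not dividing |G|, and suppose v ∈ V is nonzero with stabilizer S ⊆ G of the line through v, so that s·v = χ(s)v for a character χ : S → k^*. If χ is trivial, then for every m ≥ |G| there exists a G-invariant homogeneous polynomial f of degree m with f(v) ≠ 0. -/
open MvPolynomial

private lemma eval_linPoly {k : Type*} [Field k] {ι : Type*} [Fintype ι] [DecidableEq ι]
    (φ : (ι → k) →ₗ[k] k) (w : ι → k) :
    MvPolynomial.eval w (∑ i, MvPolynomial.C (φ (Pi.single i 1)) * MvPolynomial.X i) = φ w := by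
  have hw : w = ∑ i, w i • (Pi.single i (1:k) : ι → k) := by
    funext j
    simp [Finset.sum_apply, Pi.single_apply, mul_ite]
  rw [map_sum]
  conv_rhs => rw [hw, map_sum]
  simp [mul_comm]

private lemma linPoly_homog {k : Type*} [Field k] {ι : Type*} [Fintype ι] [DecidableEq ι]
    (φ : (ι → k) →ₗ[k] k) :
    (∑ i, MvPolynomial.C (φ (Pi.single i 1)) * MvPolynomial.X i : MvPolynomial ι k).IsHomogeneous 1 := by
  apply MvPolynomial.IsHomogeneous.sum
  intro i _
  exact (MvPolynomial.isHomogeneous_X k i).C_mul _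

private lemma eval_aeval_linsub {k : Type*} [Field k] {ι : Type*} [Fintype ι] [DecidableEq ι]
    (A : Module.End k (ι → k)) (p : MvPolynomial ι k) (w : ι → k) :
    MvPolynomial.eval w
      (MvPolynomial.aeval (fun i => ∑ j, MvPolynomial.C (A (Pi.single j 1) i) * MvPolynomial.X j) p)
      = MvPolynomial.eval (A w) p := by
  have h1 : ∀ p : MvPolynomial ι k, ∀ u : ι → k, MvPolynomial.aeval u p = MvPolynomial.eval u p := by
    intro p u
    rw [MvPolynomial.aeval_def, MvPolynomial.eval, Algebra.algebraMap_self]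
    rfl
  have h2 : (fun i => MvPolynomial.aeval w (∑ j, MvPolynomial.C (A (Pi.single j 1) i) * MvPolynomial.X j)) = A w := by
    funext i
    rw [h1]
    have := eval_linPoly ((LinearMap.proj i).comp A) w
    simpa using this
  rw [← h1, ← MvPolynomial.bind₁, MvPolynomial.aeval_bind₁, h2, h1]

/-- If the character of the stabilizer of the line through `v ≠ 0` is trivial, then for every
`m ≥ |G|` some `G`-invariant homogeneous polynomial of degree `m` does not vanish at `v`. -/
theorem stmt3 (k : Type*) [Field k] (ι : Type*) [Fintype ι]
    (G : Subgroup (Module.End k (ι → k))ˣ) [Finite G]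
    (hchar : (Nat.card G : k) ≠ 0)
    (v : ι → k) (hv : v ≠ 0)
    (hχ : ∀ s ∈ G, (∃ c : k, (s : Module.End k (ι → k)) v = c • v) →
      (s : Module.End k (ι → k)) v = v) :
    ∀ m : ℕ, Nat.card G ≤ m →
      ∃ f : MvPolynomial ι k, f.IsHomogeneous m ∧
        (∀ g ∈ G, ∀ w : ι → k,
          MvPolynomial.eval ((g : Module.End k (ι → k)) w) f = MvPolynomial.eval w f) ∧
        MvPolynomial.eval v f ≠ 0 := by
  classical
  intro m hm
  have : Fintype G := Fintype.ofFinite _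
  obtain ⟨i0, hi0⟩ : ∃ i, v i ≠ 0 := by
    by_contra hcon; push_neg at hcon; exact hv (funext hcon)
  -- a degree-1 form vanishing at `g v` (when `g v ≠ v`) but not at `v`
  have key : ∀ g : G, ∃ q : MvPolynomial ι k, q.IsHomogeneous 1 ∧
      MvPolynomial.eval v q ≠ 0 ∧
      (((g : (Module.End k (ι → k))ˣ) : Module.End k (ι → k)) v ≠ v →
        MvPolynomial.eval (((g : (Module.End k (ι → k))ˣ) : Module.End k (ι → k)) v) q = 0) := by
    intro g
    by_cases hg : ((g : (Module.End k (ι → k))ˣ) : Module.End k (ι → k)) v = v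
    · exact ⟨X i0, isHomogeneous_X _ _, by simpa using hi0, fun hcon => absurd hg hcon⟩
    · have hnm : v ∉ Submodule.span k {((g : (Module.End k (ι → k))ˣ) : Module.End k (ι → k)) v} := by
        intro hmem
        rw [Submodule.mem_span_singleton] at hmem
        obtain ⟨c, hc⟩ := hmem
        have hc0 : c ≠ 0 := by rintro rfl; rw [zero_smul] at hc; exact hv hc.symm
        refine hg (hχ _ g.2 ⟨c⁻¹, ?_⟩)
        rw [← hc, smul_smul, inv_mul_cancel₀ hc0, one_smul, hc]
      obtain ⟨φ, hφv, hφmap⟩ := Submodule.exists_dual_map_eq_bot_of_notMem hnm inferInstance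
      refine ⟨∑ i, C (φ (Pi.single i 1)) * X i, linPoly_homog φ, ?_, fun _ => ?_⟩
      · rw [eval_linPoly]; exact hφv
      · rw [eval_linPoly]
        have hmem : φ (((g : (Module.End k (ι → k))ˣ) : Module.End k (ι → k)) v) ∈
            Submodule.map φ
              (Submodule.span k {((g : (Module.End k (ι → k))ˣ) : Module.End k (ι → k)) v}) :=
          ⟨_, Submodule.mem_span_singleton_self _, rfl⟩
        rw [hφmap, Submodule.mem_bot] at hmem
        exact hmem
  choose q hqh hqv hq0 using key
  have hN : Nat.card G = Fintype.card G := Nat.card_eq_fintype_card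
  set N := Fintype.card G with hNdef
  rw [hN] at hm hchar
  set h : MvPolynomial ι k := (∏ g : G, q g) * (X i0) ^ (m - N) with hh
  have hhom : h.IsHomogeneous m := by
    have h1 : (∏ g : G, q g).IsHomogeneous N := by
      have := MvPolynomial.IsHomogeneous.prod Finset.univ q (fun _ => 1) (fun g _ => hqh g)
      simpa using this
    have h2 := h1.mul (MvPolynomial.isHomogeneous_X_pow i0 (m - N))
    rwa [Nat.add_sub_cancel' hm] at h2
  have hhv : MvPolynomial.eval v h ≠ 0 := by
    rw [hh, map_mul, map_prod, map_pow, eval_X]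
    exact mul_ne_zero (Finset.prod_ne_zero_iff.mpr fun g _ => hqv g) (pow_ne_zero _ hi0)
  have hh0 : ∀ g : G, ((g : (Module.End k (ι → k))ˣ) : Module.End k (ι → k)) v ≠ v →
      MvPolynomial.eval (((g : (Module.End k (ι → k))ˣ) : Module.End k (ι → k)) v) h = 0 := by
    intro g hg
    rw [hh, map_mul, map_prod, Finset.prod_eq_zero (Finset.mem_univ g) (hq0 g hg), zero_mul]
  -- the invariant polynomial
  set P : G → ι → MvPolynomial ι k := fun g i =>
    ∑ j, C (((g : (Module.End k (ι → k))ˣ) : Module.End k (ι → k)) (Pi.single j 1) i) * X j with hP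
  refine ⟨∑ g : G, MvPolynomial.aeval (P g) h, ?_, ?_, ?_⟩
  · apply MvPolynomial.IsHomogeneous.sum
    intro g _
    have hgh : ∀ i, (P g i).IsHomogeneous 1 := by
      intro i
      have := linPoly_homog ((LinearMap.proj i).comp
        ((g : (Module.End k (ι → k))ˣ) : Module.End k (ι → k)))
      simpa [hP] using this
    have := hhom.aeval (P g) hgh
    rwa [one_mul] at this
  · intro g0 hg0 w
    rw [map_sum, map_sum]
    set g0' : G := ⟨g0, hg0⟩ with hg0'
    have step1 : ∀ g : G, MvPolynomial.eval ((g0 : Module.End k (ι → k)) w)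
        (MvPolynomial.aeval (P g) h) =
        MvPolynomial.eval ((((g * g0' : G) : (Module.End k (ι → k))ˣ) : Module.End k (ι → k)) w) h := by
      intro g
      rw [hP, eval_aeval_linsub]
      congr 1
    have step2 : ∀ g : G, MvPolynomial.eval w (MvPolynomial.aeval (P g) h) =
        MvPolynomial.eval (((g : (Module.End k (ι → k))ˣ) : Module.End k (ι → k)) w) h := by
      intro g
      rw [hP, eval_aeval_linsub]
    rw [Finset.sum_congr rfl fun g _ => step1 g, Finset.sum_congr rfl fun g _ => step2 g]
    exact Fintype.sum_equiv (Equiv.mulRight g0') _ _ (fun g => rfl)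
  · rw [map_sum]
    have step : ∀ g : G, MvPolynomial.eval v (MvPolynomial.aeval (P g) h) =
        if ((g : (Module.End k (ι → k))ˣ) : Module.End k (ι → k)) v = v
          then MvPolynomial.eval v h else 0 := by
      intro g
      rw [hP, eval_aeval_linsub]
      split
      next hgv => rw [hgv]
      next hgv => exact hh0 g hgv
    rw [Finset.sum_congr rfl fun g _ => step g, ← Finset.sum_filter, Finset.sum_const]
    set S' : Subgroup G :=
      { carrier := {g : G | ((g : (Module.End k (ι → k))ˣ) : Module.End k (ι → k)) v = v}
        one_mem' := by simp
        mul_mem' := by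
          intro a b ha hb
          show (((a * b : G) : (Module.End k (ι → k))ˣ) : Module.End k (ι → k)) v = v
          rw [Subgroup.coe_mul, Units.val_mul, Module.End.mul_apply, hb, ha]
        inv_mem' := by
          intro a ha
          show (((a⁻¹ : G) : (Module.End k (ι → k))ˣ) : Module.End k (ι → k)) v = v
          conv_lhs => rw [← ha]
          rw [← Module.End.mul_apply, ← Units.val_mul, ← Subgroup.coe_mul, inv_mul_cancel]
          simp } with hS'
    have hcardeq : (Finset.univ.filter
        (fun g : G => ((g : (Module.End k (ι → k))ˣ) : Module.End k (ι → k)) v = v)).card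
        = Nat.card S' := by
      rw [Nat.card_eq_fintype_card, Fintype.card_subtype]
      congr 1
      exact Finset.filter_congr fun g _ => Iff.rfl
    have hdvd : Nat.card S' ∣ N := by
      rw [← hN]
      exact Subgroup.card_subgroup_dvd_card S'
    obtain ⟨t, ht⟩ := hdvd
    have hcne : ((Nat.card S' : ℕ) : k) ≠ 0 := by
      intro hzero
      apply hchar
      rw [ht, Nat.cast_mul, hzero, zero_mul]
    rw [hcardeq, nsmul_eq_mul]
    exact mul_ne_zero hcne hhv
end

section
/- Let d_1, …, d_s be positive integers with gcd(d_1, …, d_s) = 1. Then there exists q_0 such that for every integer q ≥ q_0, the set Λ^q = {(a_1,…,a_s) ∈ Z_{≥0}^s : a_1 d_1 + ⋯ + a_s d_s = q} spans Q^s as a Q-vector space. -/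
theorem bezout_finset {ι : Type*} [DecidableEq ι] (t : Finset ι) (f : ι → ℕ) :
    ∃ c : ι → ℤ, ∑ i ∈ t, c i * f i = ((t.gcd f : ℕ) : ℤ) := by
  induction t using Finset.induction_on with
  | empty => exact ⟨0, by simp⟩
  | @insert a t ha ih =>
    obtain ⟨c, hc⟩ := ih
    refine ⟨fun i => if i = a then Nat.gcdA (f a) (t.gcd f) else Nat.gcdB (f a) (t.gcd f) * c i, ?_⟩
    rw [Finset.sum_insert ha, Finset.gcd_insert]
    have : ∀ i ∈ t, (if i = a then Nat.gcdA (f a) (t.gcd f) else Nat.gcdB (f a) (t.gcd f) * c i) * f i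
        = Nat.gcdB (f a) (t.gcd f) * (c i * f i) := by
      intro i hi
      rw [if_neg (by rintro rfl; exact ha hi), mul_assoc]
    rw [Finset.sum_congr rfl this, ← Finset.mul_sum, hc]
    simp only [if_pos rfl]
    have := Nat.gcd_eq_gcd_ab (f a) (t.gcd f)
    have hnorm : GCDMonoid.gcd (f a) (t.gcd f) = Nat.gcd (f a) (t.gcd f) := rfl
    push_cast [hnorm, this]
    ring


theorem span_aux {s : ℕ} (d : Fin s → ℚ) (i0 : Fin s) (hd0 : d i0 ≠ 0)
    (A : Fin s → ℚ) (q : ℚ) (hq : q ≠ 0) (hA : ∑ i, A i * d i = q)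
    (S : Set (Fin s → ℚ)) (hAS : A ∈ S)
    (hBS : ∀ j, j ≠ i0 →
      (A + d j • (Pi.single i0 1 : Fin s → ℚ) - d i0 • (Pi.single j 1 : Fin s → ℚ)) ∈ S) :
    Submodule.span ℚ S = ⊤ := by
  set v : Fin s → (Fin s → ℚ) :=
    fun j => d j • (Pi.single i0 1 : Fin s → ℚ) - d i0 • (Pi.single j 1 : Fin s → ℚ) with hv
  have hvc : ∀ j i, v j i
      = d j * (if i = i0 then 1 else 0) - d i0 * (if i = j then 1 else 0) := by
    intro j i
    simp [hv, Pi.single_apply]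
  have hvmem : ∀ j, j ≠ i0 → v j ∈ Submodule.span ℚ S := by
    intro j hj
    have h1 := Submodule.subset_span (R := ℚ) (hBS j hj)
    have h2 := Submodule.subset_span (R := ℚ) hAS
    have heq : v j = (A + d j • (Pi.single i0 1 : Fin s → ℚ)
        - d i0 • (Pi.single j 1 : Fin s → ℚ)) - A := by
      rw [hv]; abel
    rw [heq]
    exact Submodule.sub_mem _ h1 h2
  have hu_eq : A + ∑ j ∈ Finset.univ.erase i0, (A j / d i0) • v j
      = (q / d i0) • (Pi.single i0 1 : Fin s → ℚ) := by
    funext i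
    simp only [Pi.add_apply, Finset.sum_apply, Pi.smul_apply, smul_eq_mul, Pi.single_apply]
    by_cases hi : i = i0
    · subst hi
      have hsum : ∑ j ∈ Finset.univ.erase i, A j * d j = q - A i * d i := by
        rw [eq_sub_iff_add_eq, Finset.sum_erase_add _ _ (Finset.mem_univ i)]
        exact hA
      have hcong : ∀ j ∈ Finset.univ.erase i, A j / d i * v j i = A j * d j * (d i)⁻¹ := by
        intro j hj
        have hji : i ≠ j := fun h => (Finset.mem_erase.1 hj).1 h.symm
        rw [hvc]
        simp [if_neg hji]
        ring
      rw [Finset.sum_congr rfl hcong, ← Finset.sum_mul, hsum, if_pos rfl]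
      field_simp
      ring
    · have hcong : ∀ j ∈ Finset.univ.erase i0, A j / d i0 * v j i
          = if j = i then -A j else 0 := by
        intro j hj
        rw [hvc]
        by_cases hji : j = i
        · subst hji
          simp [if_neg hi]
          field_simp
        · have hij : ¬ i = j := fun h => hji h.symm
          simp [if_neg hi, if_neg hij, hji]
      rw [Finset.sum_congr rfl hcong, Finset.sum_ite_eq' (Finset.univ.erase i0) i (fun j => -A j),
        if_pos (Finset.mem_erase.2 ⟨hi, Finset.mem_univ i⟩), if_neg hi]
      ring
  have hu : (q / d i0) • (Pi.single i0 1 : Fin s → ℚ) ∈ Submodule.span ℚ S := by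
    rw [← hu_eq]
    exact Submodule.add_mem _ (Submodule.subset_span hAS)
      (Submodule.sum_mem _ fun j hj =>
        Submodule.smul_mem _ _ (hvmem j (Finset.mem_erase.1 hj).1))
  have he0 : (Pi.single i0 1 : Fin s → ℚ) ∈ Submodule.span ℚ S := by
    have hne : q / d i0 ≠ 0 := div_ne_zero hq hd0
    have := Submodule.smul_mem _ (q / d i0)⁻¹ hu
    rwa [inv_smul_smul₀ hne] at this
  have hej : ∀ j, (Pi.single j 1 : Fin s → ℚ) ∈ Submodule.span ℚ S := by
    intro j
    by_cases hj : j = i0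
    · subst hj; exact he0
    · have heq : (Pi.single j 1 : Fin s → ℚ)
          = (d j / d i0) • (Pi.single i0 1 : Fin s → ℚ) - (d i0)⁻¹ • v j := by
        funext i
        simp only [Pi.sub_apply, Pi.smul_apply, smul_eq_mul, Pi.single_apply, hvc]
        by_cases hi : i = i0 <;> by_cases hij : i = j
        · exact absurd (hij.symm.trans hi) hj
        · simp only [if_pos hi, if_neg hij]; ring
        · simp only [if_neg hi, if_pos hij]; simp [hd0]
        · simp only [if_neg hi, if_neg hij]; ring
      rw [heq]
      exact Submodule.sub_mem _ (Submodule.smul_mem _ _ he0)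
        (Submodule.smul_mem _ _ (hvmem j hj))
  rw [eq_top_iff, ← (Pi.basisFun ℚ (Fin s)).span_eq, Submodule.span_le]
  rintro _ ⟨i, rfl⟩
  simpa [Pi.basisFun_apply] using hej i

/-- Claim 3: for coprime positive integers `d₁, …, d_s`, for all sufficiently large `q` the set
of nonnegative integer solutions of `a₁d₁ + ⋯ + a_s d_s = q` spans `ℚ^s`. -/
theorem stmt5 (s : ℕ) (d : Fin s → ℕ) (hd : ∀ i, 0 < d i)
    (hgcd : Finset.univ.gcd d = 1) :
    ∃ q₀ : ℕ, ∀ q : ℕ, q₀ ≤ q →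
      Submodule.span ℚ {x : Fin s → ℚ | ∃ a : Fin s → ℕ,
        (∀ i, x i = (a i : ℚ)) ∧ ∑ i, a i * d i = q} = ⊤ := by
  rcases Nat.eq_zero_or_pos s with hs | hs
  · subst hs
    rw [Finset.univ_eq_empty, Finset.gcd_empty] at hgcd
    exact absurd hgcd (by norm_num)
  obtain ⟨c, hc⟩ := bezout_finset Finset.univ d
  rw [hgcd] at hc
  norm_num at hc
  set i0 : Fin s := ⟨0, hs⟩ with hi0
  set C : ℕ := Finset.univ.sup fun i => (c i).natAbs with hC
  set N : ℕ := (C + 1) * d i0 with hN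
  set D : ℕ := ∑ i, d i with hD
  refine ⟨N * D + 1, fun q hq => ?_⟩
  have hqpos : 1 ≤ q := le_trans (Nat.le_add_left 1 (N * D)) hq
  have hqND : N * D ≤ q := by omega
  set m : ℕ := q - N * D with hmdef
  set k : ℕ := m / d i0 with hk
  set r : ℕ := m % d i0 with hr
  have hrlt : r < d i0 := Nat.mod_lt _ (hd i0)
  have hm : N * D + (d i0 * k + r) = q := by
    rw [hk, hr, Nat.div_add_mod]
    omega
  -- the integer solution
  set aZ : Fin s → ℤ := fun i => N + c i * r + (if i = i0 then (k : ℤ) else 0) with haZ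
  have hlow : ∀ i, (d i0 : ℤ) ≤ aZ i := by
    intro i
    have h1 : (c i).natAbs ≤ C :=
      Finset.le_sup (f := fun i => (c i).natAbs) (Finset.mem_univ i)
    have habs : |c i| ≤ (C : ℤ) := by
      rw [Int.abs_eq_natAbs]; exact_mod_cast h1
    have h2 : -((C : ℤ)) ≤ c i := neg_le_of_abs_le habs
    have h3 : (0 : ℤ) ≤ r := Int.natCast_nonneg r
    have h4 : (r : ℤ) ≤ (d i0 : ℤ) - 1 := by omega
    have h5 : -((C : ℤ)) * r ≤ c i * r := mul_le_mul_of_nonneg_right h2 h3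
    have h6 : (0 : ℤ) ≤ (if i = i0 then (k : ℤ) else 0) := by positivity
    have hNval : (N : ℤ) = ((C : ℤ) + 1) * (d i0 : ℤ) := by rw [hN]; push_cast; ring
    rw [haZ]
    simp only
    nlinarith [Int.natCast_nonneg C, Int.natCast_nonneg (d i0)]
  have hsol : ∑ i, aZ i * (d i : ℤ) = (q : ℤ) := by
    have e1 : ∀ i : Fin s, aZ i * (d i : ℤ)
        = (N : ℤ) * (d i : ℤ) + (r : ℤ) * (c i * (d i : ℤ))
          + (if i = i0 then (k : ℤ) * (d i : ℤ) else 0) := by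
      intro i
      rw [haZ]
      by_cases hi : i = i0 <;> simp [hi] <;> ring
    rw [Finset.sum_congr rfl (fun i _ => e1 i)]
    rw [Finset.sum_add_distrib, Finset.sum_add_distrib, ← Finset.mul_sum, ← Finset.mul_sum, hc,
      Finset.sum_ite_eq' Finset.univ i0 (fun i => (k : ℤ) * (d i : ℤ)), if_pos (Finset.mem_univ i0)]
    have hmZ : (N : ℤ) * D + ((d i0 : ℤ) * k + (r : ℤ)) = (q : ℤ) := by exact_mod_cast hm
    rw [hD] at hmZ
    push_cast at hmZ ⊢
    linarith
  set a : Fin s → ℕ := fun i => (aZ i).toNat with ha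
  have hcast : ∀ i, ((a i : ℕ) : ℤ) = aZ i := by
    intro i
    exact Int.toNat_of_nonneg (le_trans (Int.natCast_nonneg _) (hlow i))
  have hlowa : ∀ i, d i0 ≤ a i := by
    intro i
    have := hlow i
    rw [← hcast i] at this
    exact_mod_cast this
  have hasum : ∑ i, a i * d i = q := by
    have : ((∑ i, a i * d i : ℕ) : ℤ) = ((q : ℕ) : ℤ) := by
      push_cast
      rw [Finset.sum_congr rfl (fun i _ => by rw [hcast i])]
      exact hsol
    exact_mod_cast this
  -- apply the span lemma
  apply span_aux (fun i => (d i : ℚ)) i0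
    (by simpa using (Nat.cast_ne_zero (R := ℚ)).mpr (hd i0).ne') (fun i => (a i : ℚ)) q
  · exact Nat.cast_ne_zero.mpr (by omega)
  · exact_mod_cast hasum
  · exact ⟨a, fun i => rfl, hasum⟩
  · intro j hj
    set b : Fin s → ℕ := fun i =>
      if i = i0 then a i0 + d j else if i = j then a j - d i0 else a i with hb
    refine ⟨b, ?_, ?_⟩
    · intro i
      simp only [Pi.add_apply, Pi.sub_apply, Pi.smul_apply, smul_eq_mul, Pi.single_apply, hb]
      by_cases hi : i = i0
      · rw [hi]
        have hij : i0 ≠ j := fun h => hj h.symm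
        simp [if_neg hij]
      · by_cases hij : i = j
        · rw [hij]
          simp [if_neg hj, Nat.cast_sub (hlowa j)]
        · simp [hi, hij]
    · have hbZ : ∀ i, ((b i : ℕ) : ℤ)
          = aZ i + (if i = i0 then (d j : ℤ) else 0) - (if i = j then (d i0 : ℤ) else 0) := by
        intro i
        rw [hb]
        by_cases hi : i = i0
        · rw [hi]
          have hij : i0 ≠ j := fun h => hj h.symm
          simp [if_neg hij, hcast i0]
        · by_cases hij : i = j
          · rw [hij]
            simp [if_neg hj, Nat.cast_sub (hlowa j), hcast j]
          · simp [hi, hij, hcast i]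
      have : ((∑ i, b i * d i : ℕ) : ℤ) = ((q : ℕ) : ℤ) := by
        push_cast
        rw [Finset.sum_congr rfl (fun i _ => by rw [hbZ i])]
        simp only [sub_mul, add_mul, ite_mul, zero_mul]
        rw [Finset.sum_sub_distrib, Finset.sum_add_distrib, hsol,
          Finset.sum_ite_eq' Finset.univ i0 (fun i => (d j : ℤ) * (d i : ℤ)),
          Finset.sum_ite_eq' Finset.univ j (fun i => (d i0 : ℤ) * (d i : ℤ))]
        simp [mul_comm]
      exact_mod_cast this
end

section
/- Let G be a finite group with subgroups G_0 and G_1 acting linearly on V = V_0 ⊕ V_1, where G_0 fixes V_1 pointwise, G_1 fixes V_0 pointwise, V_0 is the unique G_0-invariant complement of V_1 = V^{G_0}, and V_1 is the unique G_1-invariant complement of V_0 = V^{G_1}. Then G_0 and G_1 commute elementwise, G_0 ∩ G_1 = {1}, and together they generate a subgroup isomorphic to G_0 × G_1. -/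
/-- Proposition 3.1(d), intermediate step: `G₀` and `G₁` commute elementwise, intersect
trivially, and generate a subgroup isomorphic to `G₀ × G₁`. -/
theorem stmt7 (k V : Type*) [Field k] [AddCommGroup V] [Module k V]
    (G : Subgroup (Module.End k V)ˣ) [Finite G]
    (G₀ G₁ : Subgroup (Module.End k V)ˣ) (h₀G : G₀ ≤ G) (h₁G : G₁ ≤ G)
    (V₀ V₁ : Submodule k V) (hc : IsCompl V₀ V₁)
    (h₀fix : ∀ g ∈ G₀, ∀ v ∈ V₁, (g : Module.End k V) v = v)
    (h₁fix : ∀ g ∈ G₁, ∀ v ∈ V₀, (g : Module.End k V) v = v)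
    (h₀inv : ∀ g ∈ G₀, ∀ v ∈ V₀, (g : Module.End k V) v ∈ V₀)
    (h₁inv : ∀ g ∈ G₁, ∀ v ∈ V₁, (g : Module.End k V) v ∈ V₁)
    (h₀fixed : ∀ v : V, (∀ g ∈ G₀, (g : Module.End k V) v = v) ↔ v ∈ V₁)
    (h₁fixed : ∀ v : V, (∀ g ∈ G₁, (g : Module.End k V) v = v) ↔ v ∈ V₀)
    (h₀uniq : ∀ W : Submodule k V, IsCompl W V₁ →
      (∀ g ∈ G₀, ∀ w ∈ W, (g : Module.End k V) w ∈ W) → W = V₀)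
    (h₁uniq : ∀ W : Submodule k V, IsCompl W V₀ →
      (∀ g ∈ G₁, ∀ w ∈ W, (g : Module.End k V) w ∈ W) → W = V₁) :
    (∀ g ∈ G₀, ∀ h ∈ G₁, g * h = h * g) ∧ G₀ ⊓ G₁ = ⊥ ∧
      Nonempty ((G₀ ⊔ G₁ : Subgroup (Module.End k V)ˣ) ≃* G₀ × G₁) := by
  -- decompose any vector
  have hdecomp : ∀ v : V, ∃ x ∈ V₀, ∃ y ∈ V₁, v = x + y := by
    intro v
    have : v ∈ V₀ ⊔ V₁ := by rw [hc.sup_eq_top]; trivial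
    rcases Submodule.mem_sup.mp this with ⟨x, hx, y, hy, rfl⟩
    exact ⟨x, hx, y, hy, rfl⟩
  have hcomm : ∀ g ∈ G₀, ∀ h ∈ G₁, g * h = h * g := by
    intro g hg h hh
    ext1
    apply LinearMap.ext
    intro v
    rcases hdecomp v with ⟨x, hx, y, hy, rfl⟩
    have e1 : ((g * h : (Module.End k V)ˣ) : Module.End k V) (x + y)
        = (g : Module.End k V) x + (h : Module.End k V) y := by
      simp only [Units.val_mul, Module.End.mul_apply, map_add,
        h₁fix h hh x hx, h₀fix g hg _ (h₁inv h hh y hy)]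
    have e2 : ((h * g : (Module.End k V)ˣ) : Module.End k V) (x + y)
        = (g : Module.End k V) x + (h : Module.End k V) y := by
      simp only [Units.val_mul, Module.End.mul_apply, map_add,
        h₀fix g hg y hy, h₁fix h hh _ (h₀inv g hg x hx)]
    rw [e1, ← e2]
  have hdisj : G₀ ⊓ G₁ = ⊥ := by
    rw [eq_bot_iff]
    rintro g ⟨hg0, hg1⟩
    have : ∀ v : V, (g : Module.End k V) v = v := by
      intro v
      rcases hdecomp v with ⟨x, hx, y, hy, rfl⟩
      rw [map_add, h₁fix g hg1 x hx, h₀fix g hg0 y hy]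
    have : g = 1 := by
      ext1; apply LinearMap.ext; intro v; simpa using this v
    simp [this, Subgroup.mem_bot]
  refine ⟨hcomm, hdisj, ?_⟩
  set φ : (G₀ × G₁) →* (Module.End k V)ˣ :=
    (G₀.subtype.noncommCoprod G₁.subtype
      (fun a b => hcomm a a.2 b b.2)) with hφ
  have hinj : Function.Injective φ := by
    rw [injective_iff_map_eq_one]
    rintro ⟨a, b⟩ hab
    have hab' : (a : (Module.End k V)ˣ) * b = 1 := hab
    have ha : (a : (Module.End k V)ˣ) = (b : (Module.End k V)ˣ)⁻¹ :=
      eq_inv_of_mul_eq_one_left hab'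
    have hmem : (a : (Module.End k V)ˣ) ∈ G₀ ⊓ G₁ :=
      ⟨a.2, ha ▸ G₁.inv_mem b.2⟩
    rw [hdisj, Subgroup.mem_bot] at hmem
    have hb : (b : (Module.End k V)ˣ) = 1 := by
      rw [hmem, one_mul] at hab'; exact hab'
    ext <;> simp [hmem, hb]
  have hrange : φ.range = G₀ ⊔ G₁ := by
    apply le_antisymm
    · rintro _ ⟨⟨a, b⟩, rfl⟩
      exact mul_mem (Subgroup.mem_sup_left a.2) (Subgroup.mem_sup_right b.2)
    · rw [sup_le_iff]
      constructor
      · intro x hx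
        exact ⟨⟨⟨x, hx⟩, 1⟩, by rw [hφ]; exact (MonoidHom.noncommCoprod_apply _ _ _ _).trans (by simp)⟩
      · intro x hx
        exact ⟨⟨1, ⟨x, hx⟩⟩, by rw [hφ]; exact (MonoidHom.noncommCoprod_apply _ _ _ _).trans (by simp)⟩
  exact ⟨((MonoidHom.ofInjective hinj).trans
    (MulEquiv.subgroupCongr hrange)).symm⟩
end

section
/- Let G ⊆ GL(V) be a finite group generated by pseudo-reflections, none of which has order divisible by a prime p. Then every Sylow p-subgroup of G is contained in the commutator subgroup [G, G]. -/
/-- `g` is a pseudo-reflection: it acts as the identity on a hyperplane `H` and as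
multiplication by a root of unity `ζ ≠ 1` on a complementary line. -/
def IsPseudoReflection (k V : Type*) [Field k] [AddCommGroup V] [Module k V]
    (g : (Module.End k V)ˣ) : Prop :=
  ∃ ζ : k, ζ ≠ 1 ∧ (∃ n : ℕ, 0 < n ∧ ζ ^ n = 1) ∧
    ∃ H L : Submodule k V, IsCompl H L ∧ Module.finrank k L = 1 ∧
      (∀ v ∈ H, (g : Module.End k V) v = v) ∧
      (∀ v ∈ L, (g : Module.End k V) v = ζ • v)

/-- In a commutative group, the elements of order not divisible by a prime `p` form a
subgroup. -/
def primeToPart (A : Type*) [CommGroup A] {p : ℕ} (hp : p.Prime) : Subgroup A where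
  carrier := {y | ¬ p ∣ orderOf y}
  one_mem' := by simp [Nat.Prime.one_lt hp, (Nat.Prime.one_lt hp).ne']
  mul_mem' := by
    intro a b ha hb hdvd
    have h1 : orderOf (a * b) ∣ Nat.lcm (orderOf a) (orderOf b) :=
      (Commute.all a b).orderOf_mul_dvd_lcm
    have h3 : Nat.lcm (orderOf a) (orderOf b) ∣ orderOf a * orderOf b :=
      Nat.lcm_dvd_mul _ _
    rcases hp.dvd_mul.mp ((hdvd.trans h1).trans h3) with h | h
    · exact ha h
    · exact hb h
  inv_mem' := by intro a ha; simpa using ha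

/-- Proposition 3.1(g): if `G` is generated by pseudo-reflections of order not divisible by
`p`, then every Sylow `p`-subgroup of `G` lies in the commutator subgroup `[G,G]`. -/
theorem stmt10 (k V : Type*) [Field k] [AddCommGroup V] [Module k V]
    [FiniteDimensional k V]
    (G : Subgroup (Module.End k V)ˣ) [Finite G] (p : ℕ) [Fact p.Prime]
    (hchar : (Nat.card G : k) ≠ 0)
    (hgen : Subgroup.closure
      {g : (Module.End k V)ˣ | g ∈ G ∧ IsPseudoReflection k V g} = G)
    (hord : ∀ g ∈ G, IsPseudoReflection k V g → ¬ p ∣ orderOf g) :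
    ∀ P : Sylow p G, (P : Subgroup G) ≤ commutator G := by
  have hp : p.Prime := Fact.out
  intro P x hx
  set K : Subgroup (Abelianization G) := primeToPart (Abelianization G) hp with hK
  -- every element of `G` maps into `K` under the abelianization map
  have hgenK : ∀ g : G, Abelianization.of g ∈ K := by
    intro g
    have hcl : (g : (Module.End k V)ˣ) ∈ Subgroup.closure
        {g : (Module.End k V)ˣ | g ∈ G ∧ IsPseudoReflection k V g} := by
      rw [hgen]; exact g.2
    have main : ∀ (u : (Module.End k V)ˣ) (hu : u ∈ Subgroup.closure
        {g : (Module.End k V)ˣ | g ∈ G ∧ IsPseudoReflection k V g}),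
        Abelianization.of (⟨u, hgen ▸ hu⟩ : G) ∈ K := by
      intro u hu
      induction hu using Subgroup.closure_induction with
      | mem y hy =>
        intro hdvd
        apply hord y hy.1 hy.2
        have h1 : orderOf (Abelianization.of (⟨y, hy.1⟩ : G)) ∣ orderOf (⟨y, hy.1⟩ : G) :=
          orderOf_map_dvd _ _
        have h2 : orderOf (⟨y, hy.1⟩ : G) = orderOf y := Subgroup.orderOf_mk y hy.1
        exact hdvd.trans (h2 ▸ h1)
      | one =>
        have : (⟨(1 : (Module.End k V)ˣ), hgen ▸ Subgroup.one_mem _⟩ : G) = 1 := rfl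
        rw [this, map_one]
        exact K.one_mem
      | mul a b ha hb iha ihb =>
        have : (⟨a * b, hgen ▸ Subgroup.mul_mem _ ha hb⟩ : G)
            = (⟨a, hgen ▸ ha⟩ : G) * (⟨b, hgen ▸ hb⟩ : G) := rfl
        rw [show (⟨a * b, hgen ▸ mul_mem ha hb⟩ : G)
            = (⟨a, hgen ▸ ha⟩ : G) * (⟨b, hgen ▸ hb⟩ : G) from rfl, map_mul]
        exact K.mul_mem iha ihb
      | inv a ha iha =>
        rw [show (⟨a⁻¹, hgen ▸ inv_mem ha⟩ : G) = (⟨a, hgen ▸ ha⟩ : G)⁻¹ from rfl, map_inv]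
        exact K.inv_mem iha
    have := main (g : (Module.End k V)ˣ) hcl
    convert this using 2
  -- `x` is a `p`-element, so its image in the abelianization has `p`-power order
  obtain ⟨n, hn⟩ := P.2 ⟨x, hx⟩
  have hxpow : x ^ p ^ n = 1 := by
    have := congrArg (Subtype.val) hn
    simpa using this
  have hdvd : orderOf (Abelianization.of x) ∣ p ^ n := by
    apply orderOf_dvd_of_pow_eq_one
    rw [← map_pow, hxpow, map_one]
  -- but its order is coprime to `p`, hence it is `1`
  have hnotdvd : ¬ p ∣ orderOf (Abelianization.of x) := hgenK x
  have hcop : (Nat.Coprime (p ^ n) (orderOf (Abelianization.of x))) :=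
    Nat.Coprime.pow_left n ((Nat.Prime.coprime_iff_not_dvd hp).mpr hnotdvd)
  have hone : orderOf (Abelianization.of x) = 1 :=
    Nat.eq_one_of_dvd_coprimes hcop hdvd dvd_rfl
  have : Abelianization.of x = 1 := orderOf_eq_one_iff.mp hone
  exact (QuotientGroup.eq_one_iff x).mp this
end

section
/- Let G be a finite group, g a central element of G, and φ' : G → GL(V') an irreducible representation over an algebraically closed field with φ'(g) ≠ 1 and g of order p. If g lies in the commutator subgroup [G,G], then dim(V') is divisible by p. -/
/-- Proposition 3.1(h): if a central element `g` of order `p` lying in `[G,G]` acts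
nontrivially on an irreducible representation `V'`, then `p` divides `dim V'`. -/
theorem stmt12 (k : Type*) [Field k] [IsAlgClosed k]
    (G : Type*) [Group G] [Finite G] (hchar : (Nat.card G : k) ≠ 0)
    (p : ℕ) [Fact p.Prime]
    (V : Type*) [AddCommGroup V] [Module k V] [FiniteDimensional k V]
    (ρ : Representation k G V)
    (hVnt : Nontrivial V)
    (hirr : ∀ W : Submodule k V, (∀ g : G, ∀ w ∈ W, ρ g w ∈ W) → W = ⊥ ∨ W = ⊤)
    (g : G) (hg : g ∈ Subgroup.center G) (hgp : orderOf g = p)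
    (hgρ : ρ g ≠ 1) (hgcomm : g ∈ commutator G) :
    p ∣ Module.finrank k V := by
  obtain ⟨lam, hlam⟩ := Module.End.exists_eigenvalue (ρ g : Module.End k V)
  -- the eigenspace is invariant
  have hinv : ∀ h : G, ∀ w ∈ Module.End.eigenspace (ρ g) lam,
      ρ h w ∈ Module.End.eigenspace (ρ g) lam := by
    intro h w hw
    rw [Module.End.mem_eigenspace_iff] at hw ⊢
    have hcomm : ρ g * ρ h = ρ h * ρ g := by
      rw [← map_mul, ← map_mul, (Subgroup.mem_center_iff.mp hg h)]
    calc (ρ g) ((ρ h) w) = ((ρ g) * (ρ h)) w := rfl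
      _ = ((ρ h) * (ρ g)) w := by rw [hcomm]
      _ = (ρ h) ((ρ g) w) := rfl
      _ = lam • (ρ h) w := by rw [hw, map_smul]
  have htop : Module.End.eigenspace (ρ g) lam = ⊤ := by
    rcases hirr _ hinv with hb | ht
    · exact absurd hb hlam
    · exact ht
  have hscalar : (ρ g : Module.End k V) = lam • 1 := by
    ext v
    have hv : v ∈ Module.End.eigenspace (ρ g) lam := htop ▸ Submodule.mem_top
    simpa using Module.End.mem_eigenspace_iff.mp hv
  -- λ ≠ 1
  have hlam_ne : lam ≠ 1 := by
    intro h
    apply hgρ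
    rw [hscalar, h, one_smul]
  -- λ^p = 1
  have hlamp : lam ^ p = 1 := by
    obtain ⟨v, hv⟩ := exists_ne (0 : V)
    have h2 : ((ρ g) ^ p) v = v := by
      rw [← map_pow, ← hgp, pow_orderOf_eq_one, map_one]; rfl
    rw [hscalar, smul_pow, one_pow] at h2; simp only [LinearMap.smul_apply, Module.End.one_apply] at h2
    have : (lam ^ p - 1) • v = 0 := by rw [sub_smul, one_smul, h2, sub_self]
    rcases smul_eq_zero.mp this with h | h
    · exact sub_eq_zero.mp h
    · exact absurd h hv
  -- det (ρ g) = 1 since g ∈ [G,G]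
  have hdet : LinearMap.det (ρ g : Module.End k V) = 1 := by
    have := Abelianization.commutator_subset_ker
      ((Units.map (LinearMap.det : (V →ₗ[k] V) →* k)).comp ρ.asGroupHom) hgcomm
    have h1 : Units.map (LinearMap.det : (V →ₗ[k] V) →* k) (ρ.asGroupHom g) = 1 := this
    have := congrArg Units.val h1
    simpa [Representation.asGroupHom_apply] using this
  -- det (λ • 1) = λ ^ n
  have hdet2 : lam ^ Module.finrank k V = 1 := by
    rw [hscalar] at hdet
    simpa [LinearMap.det_smul] using hdet
  have hord : orderOf lam = p := by
    have hdvd : orderOf lam ∣ p := orderOf_dvd_of_pow_eq_one hlamp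
    rcases (Nat.Prime.eq_one_or_self_of_dvd (Fact.out : p.Prime) _ hdvd).symm with h | h
    · exact h
    · exact absurd (orderOf_eq_one_iff.mp h) hlam_ne
  exact hord ▸ orderOf_dvd_of_pow_eq_one hdet2
end

section
/- The group G(m, l, n), defined as the subgroup of GL_n(k) generated by the diagonal group A(m,l,n) = {diag(ζ_m^{a_1},…,ζ_m^{a_n}) : a_1 + ⋯ + a_n ≡ 0 mod l} and the permutation matrices of S_n (where l divides m and k contains a primitive m-th root of unity ζ_m), contains the scalar matrix ζ_p·I for a prime p if and only if p divides m and n·(m/p) ≡ 0 mod l. -/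
/-- The group `G(m,l,n)`, generated inside `GL_n(k)` by the diagonal subgroup `A(m,l,n)` and
the permutation matrices, contains the scalar matrix `ζ_p·I` iff `p ∣ m` and
`n·(m/p) ≡ 0 mod l`. -/
theorem stmt13 (k : Type*) [Field k] (m l n p : ℕ) [Fact p.Prime]
    (hm : 0 < m) (hn : 0 < n) (hl : 0 < l) (hlm : l ∣ m)
    (ζ : k) (hζ : IsPrimitiveRoot ζ m)
    (ζp : k) (hζp : IsPrimitiveRoot ζp p) :
    (∃ M ∈ Subgroup.closure
        ({M : Matrix.GeneralLinearGroup (Fin n) k | ∃ a : Fin n → ℕ,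
            (M : Matrix (Fin n) (Fin n) k) = Matrix.diagonal (fun i => ζ ^ a i) ∧
            l ∣ ∑ i, a i} ∪
         {M : Matrix.GeneralLinearGroup (Fin n) k | ∃ σ : Equiv.Perm (Fin n),
            (M : Matrix (Fin n) (Fin n) k) = σ.permMatrix k}),
      (M : Matrix (Fin n) (Fin n) k) = ζp • (1 : Matrix (Fin n) (Fin n) k)) ↔
    (p ∣ m ∧ l ∣ n * (m / p)) := by
  have hp : p.Prime := Fact.out
  haveI : NeZero p := ⟨hp.ne_zero⟩
  haveI : NeZero l := ⟨hl.ne'⟩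
  have hζne : ζ ≠ 0 := hζ.ne_zero hm.ne'
  have hζpne : ζp ≠ 0 := hζp.ne_zero hp.ne_zero
  -- The subgroup of monomial matrices with entries powers of ζ and exponent sum divisible by l.
  set S : Subgroup (Matrix.GeneralLinearGroup (Fin n) k) :=
  { carrier := {M | ∃ σ : Equiv.Perm (Fin n), ∃ a : Fin n → ℕ,
      (∀ i j, (M : Matrix (Fin n) (Fin n) k) i j = if σ j = i then ζ ^ a j else 0) ∧
      l ∣ ∑ i, a i}
    one_mem' := by
      refine ⟨1, fun _ => 0, fun i j => ?_, by simp⟩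
      simp only [Matrix.GeneralLinearGroup.coe_one, Matrix.one_apply, Equiv.Perm.one_apply,
        pow_zero]
      by_cases h : i = j
      · subst h; simp
      · rw [if_neg h, if_neg (Ne.symm h)]
    mul_mem' := by
      rintro A B ⟨σ, a, hA, hal⟩ ⟨τ, b, hB, hbl⟩
      refine ⟨σ * τ, fun j => a (τ j) + b j, fun i j => ?_, ?_⟩
      · rw [Matrix.GeneralLinearGroup.coe_mul, Matrix.mul_apply]
        rw [Finset.sum_eq_single (τ j)]
        · rw [hA, hB, if_pos rfl, Equiv.Perm.mul_apply, pow_add]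
          by_cases h : σ (τ j) = i
          · rw [if_pos h, if_pos h]
          · rw [if_neg h, if_neg h, zero_mul]
        · intro x _ hx
          rw [hB, if_neg (fun h => hx h.symm), mul_zero]
        · intro h; exact absurd (Finset.mem_univ _) h
      · have : ∑ j, (a (τ j) + b j) = (∑ i, a i) + ∑ i, b i := by
          rw [Finset.sum_add_distrib, Equiv.sum_comp τ a]
        rw [this]; exact dvd_add hal hbl
    inv_mem' := by
      rintro A ⟨σ, a, hA, hal⟩
      refine ⟨σ⁻¹, fun j => (m - 1) * a (σ⁻¹ j), fun i j => ?_, ?_⟩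
      · have hinv : (A : Matrix (Fin n) (Fin n) k) *
            (Matrix.of fun i j => if σ⁻¹ j = i then ζ ^ ((m - 1) * a (σ⁻¹ j)) else 0) = 1 := by
          ext i j
          rw [Matrix.mul_apply]
          rw [Finset.sum_eq_single (σ⁻¹ j)]
          · rw [hA, Matrix.of_apply, if_pos rfl, Equiv.Perm.inv_def, Equiv.apply_symm_apply, ← Equiv.Perm.inv_def]
            by_cases h : j = i
            · subst h
              rw [if_pos rfl, ← pow_add, Matrix.one_apply_eq]
              have hle : a (σ⁻¹ j) ≤ m * a (σ⁻¹ j) := Nat.le_mul_of_pos_left _ hm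
              have h1 : a (σ⁻¹ j) + (m - 1) * a (σ⁻¹ j) = m * a (σ⁻¹ j) := by
                rw [Nat.sub_one_mul]; omega
              rw [h1, pow_mul, hζ.pow_eq_one, one_pow]
            · rw [if_neg h, zero_mul, Matrix.one_apply_ne (Ne.symm h)]
          · intro x _ hx
            rw [Matrix.of_apply, if_neg (fun h => hx h.symm), mul_zero]
          · intro h; exact absurd (Finset.mem_univ _) h
        have : ((A⁻¹ : Matrix.GeneralLinearGroup (Fin n) k) : Matrix (Fin n) (Fin n) k)
            = (A : Matrix (Fin n) (Fin n) k)⁻¹ := (Matrix.coe_units_inv A)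
        rw [this, Matrix.inv_eq_right_inv hinv, Matrix.of_apply]
      · rw [Equiv.sum_comp σ⁻¹ (fun i => (m - 1) * a i), ← Finset.mul_sum]
        exact Dvd.dvd.mul_left hal _
  } with hSdef
  have hclos : Subgroup.closure
      ({M : Matrix.GeneralLinearGroup (Fin n) k | ∃ a : Fin n → ℕ,
          (M : Matrix (Fin n) (Fin n) k) = Matrix.diagonal (fun i => ζ ^ a i) ∧
          l ∣ ∑ i, a i} ∪
       {M : Matrix.GeneralLinearGroup (Fin n) k | ∃ σ : Equiv.Perm (Fin n),
          (M : Matrix (Fin n) (Fin n) k) = σ.permMatrix k}) ≤ S := by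
    rw [Subgroup.closure_le]
    rintro M (⟨a, hMd, hdvd⟩ | ⟨σ, hMs⟩)
    · refine ⟨1, a, fun i j => ?_, hdvd⟩
      rw [hMd]
      by_cases h : i = j
      · subst h; simp [Matrix.diagonal_apply_eq]
      · rw [Matrix.diagonal_apply_ne _ h, if_neg (by simpa using Ne.symm h)]
    · refine ⟨σ⁻¹, fun _ => 0, fun i j => ?_, by simp⟩
      rw [hMs]
      simp only [Equiv.Perm.permMatrix, PEquiv.toMatrix_apply, Equiv.toPEquiv_apply,
        Option.mem_some_iff, pow_zero]
      by_cases h : σ i = j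
      · rw [if_pos h, if_pos (by rw [← h, Equiv.Perm.inv_def, Equiv.symm_apply_apply])]
      · rw [if_neg h, if_neg (fun h' => h (by rw [← h', Equiv.Perm.inv_def, Equiv.apply_symm_apply]))]
  constructor
  · rintro ⟨M, hM, hMe⟩
    -- p ∣ m
    obtain ⟨σ, a, hent, hdvd⟩ := hclos hM
    have i0 : Fin n := ⟨0, hn⟩
    have h1 : ζp = if σ i0 = i0 then ζ ^ a i0 else 0 := by
      rw [← hent i0 i0, hMe, Matrix.smul_apply, Matrix.one_apply_eq, smul_eq_mul, mul_one]
    have h2 : ζp = ζ ^ a i0 := by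
      by_cases h : σ i0 = i0
      · rwa [if_pos h] at h1
      · rw [if_neg h] at h1; exact absurd h1 hζpne
    have hpm : p ∣ m := by
      have : orderOf ζp = p := hζp.eq_orderOf.symm
      rw [← this]
      apply orderOf_dvd_of_pow_eq_one
      rw [h2, ← pow_mul, mul_comm, pow_mul, hζ.pow_eq_one, one_pow]
    refine ⟨hpm, ?_⟩
    -- power trick: get ζ^(m/p) • 1 in the closure
    have hmp1 : (ζ ^ (m / p)) ^ p = 1 := by
      rw [← pow_mul, Nat.div_mul_cancel hpm, hζ.pow_eq_one]
    obtain ⟨c, _, hcc⟩ := hζp.eq_pow_of_pow_eq_one hmp1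
    have hMc : (M ^ c) ∈ Subgroup.closure _ := pow_mem hM c
    obtain ⟨σ', a', hent', hdvd'⟩ := hclos hMc
    have hMce : ((M ^ c : Matrix.GeneralLinearGroup (Fin n) k) : Matrix (Fin n) (Fin n) k)
        = (ζ ^ (m / p)) • (1 : Matrix (Fin n) (Fin n) k) := by
      have : ((M ^ c : Matrix.GeneralLinearGroup (Fin n) k) : Matrix (Fin n) (Fin n) k)
          = ((M : Matrix (Fin n) (Fin n) k)) ^ c := Units.val_pow_eq_pow_val M c
      rw [this, hMe, smul_pow, one_pow, hcc]
    have hmod : ∀ i : Fin n, a' i ≡ m / p [MOD m] := by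
      intro i
      have h3 : (ζ ^ (m / p)) = if σ' i = i then ζ ^ a' i else 0 := by
        rw [← hent' i i, hMce, Matrix.smul_apply, Matrix.one_apply_eq, smul_eq_mul, mul_one]
      have h4 : ζ ^ a' i = ζ ^ (m / p) := by
        by_cases h : σ' i = i
        · rw [if_pos h] at h3; exact h3.symm
        · rw [if_neg h] at h3; exact absurd h3 (pow_ne_zero _ hζne)
      have hζu : IsPrimitiveRoot (Units.mk0 ζ hζne) m :=
        IsPrimitiveRoot.coe_units_iff.mp (by simpa using hζ)
      have h4u : (Units.mk0 ζ hζne) ^ (a' i) = (Units.mk0 ζ hζne) ^ (m / p) :=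
        Units.ext (by simpa using h4)
      have := pow_eq_pow_iff_modEq.mp h4u
      rwa [← hζu.eq_orderOf] at this
    -- pass to ZMod l
    have hcast : ((∑ i, a' i : ℕ) : ZMod l) = ((n * (m / p) : ℕ) : ZMod l) := by
      push_cast
      rw [Finset.sum_congr rfl (fun i _ => ?_)]
      · rw [Finset.sum_const, Finset.card_univ, Fintype.card_fin, nsmul_eq_mul]
      · exact (ZMod.natCast_eq_natCast_iff _ _ _).mpr ((hmod i).of_dvd hlm)
    have h0 : ((∑ i, a' i : ℕ) : ZMod l) = 0 :=
      (ZMod.natCast_eq_zero_iff _ _).mpr hdvd'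
    exact (ZMod.natCast_eq_zero_iff _ _).mp (h0 ▸ hcast.symm)
  · rintro ⟨hpm, hldvd⟩
    have hprim : IsPrimitiveRoot (ζ ^ (m / p)) p :=
      hζ.pow hm (by rw [Nat.div_mul_cancel hpm])
    obtain ⟨c, _, hcc⟩ := hprim.eq_pow_of_pow_eq_one hζp.pow_eq_one
    refine ⟨⟨ζp • 1, ζp⁻¹ • 1,
      by rw [smul_mul_assoc, one_mul, smul_smul, mul_inv_cancel₀ hζpne, one_smul],
      by rw [smul_mul_assoc, one_mul, smul_smul, inv_mul_cancel₀ hζpne, one_smul]⟩,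
      Subgroup.subset_closure (Or.inl ⟨fun _ => m / p * c, ?_, ?_⟩), rfl⟩
    · show (ζp • (1 : Matrix (Fin n) (Fin n) k)) = _
      ext i j
      by_cases h : i = j
      · subst h
        rw [Matrix.smul_apply, Matrix.one_apply_eq, smul_eq_mul, mul_one,
          Matrix.diagonal_apply_eq, pow_mul, hcc]
      · rw [Matrix.smul_apply, Matrix.one_apply_ne h, smul_eq_mul, mul_zero,
          Matrix.diagonal_apply_ne _ h]
    · rw [Finset.sum_const, Finset.card_univ, Fintype.card_fin, smul_eq_mul, ← mul_assoc]
      exact (hldvd).mul_right c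
end

section
/- Let G be a finite group acting on a variety Y over an algebraically closed field, transitively permuting the irreducible components of Y. Suppose for each prime p_i dividing |G| there is a smooth point y_i ∈ Y whose stabilizer contains a Sylow p_i-subgroup of G. Then Y is irreducible. -/
/-- The image of an irreducible component under a homeomorphism is an irreducible component. -/
theorem image_mem_irreducibleComponents {Y : Type*} [TopologicalSpace Y] (e : Y ≃ₜ Y)
    {C : Set Y} (hC : C ∈ irreducibleComponents Y) : e '' C ∈ irreducibleComponents Y := by
  constructor
  · exact hC.1.image e e.continuous.continuousOn
  · intro D hD hsub
    have h1 : C ⊆ e.symm '' D := by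
      intro x hx
      exact ⟨e x, hsub ⟨x, hx, rfl⟩, e.symm_apply_apply x⟩
    have h2 : IsIrreducible (e.symm '' D) := hD.image _ e.symm.continuous.continuousOn
    have h3 : e.symm '' D ⊆ C := hC.2 h2 h1
    intro x hx
    have : e.symm x ∈ C := h3 ⟨x, hx, rfl⟩
    exact ⟨e.symm x, this, e.apply_symm_apply x⟩

/-- The homeomorphism of `Y` given by the action of `g : G`. -/
def smulHomeo {G Y : Type*} [Group G] [TopologicalSpace Y] [MulAction G Y]
    (hcont : ∀ g : G, Continuous (fun y : Y => g • y)) (g : G) : Y ≃ₜ Y :=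
  { MulAction.toPerm g with
    continuous_toFun := hcont g
    continuous_invFun := hcont g⁻¹ }

/-- The action of `G` on the set of irreducible components of `Y`. -/
def compAction (G Y : Type*) [Group G] [TopologicalSpace Y] [MulAction G Y]
    (hcont : ∀ g : G, Continuous (fun y : Y => g • y)) :
    MulAction G {C : Set Y // C ∈ irreducibleComponents Y} where
  smul g C := ⟨(fun y => g • y) '' C.1,
    image_mem_irreducibleComponents (smulHomeo hcont g) C.2⟩
  one_smul C := Subtype.ext (by
    show (fun y => (1 : G) • y) '' C.1 = C.1
    ext y
    simp only [Set.mem_image, one_smul]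
    exact ⟨fun ⟨z, hz, hzy⟩ => hzy ▸ hz, fun h => ⟨y, h, rfl⟩⟩)
  mul_smul g h C := Subtype.ext (by
    show (fun y => (g * h) • y) '' C.1 = (fun y => g • y) '' ((fun y => h • y) '' C.1)
    ext y
    simp only [Set.mem_image, mul_smul]
    constructor
    · rintro ⟨z, hz, rfl⟩; exact ⟨h • z, ⟨z, hz, rfl⟩, rfl⟩
    · rintro ⟨z, ⟨w, hw, rfl⟩, rfl⟩; exact ⟨w, hw, rfl⟩)

/-- Counting lemma: a transitive action of a finite group such that for every prime `p`
dividing `|G|` some Sylow `p`-subgroup stabilizes a point has a singleton orbit space. -/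
theorem aux_card_one {G : Type*} [Group G] [Finite G] {S : Type*} [Nonempty S]
    [MulAction G S] [MulAction.IsPretransitive G S]
    (h : ∀ p : ℕ, p.Prime → p ∣ Nat.card G → ∃ (s : S) (P : Sylow p G),
      (P : Subgroup G) ≤ MulAction.stabilizer G s) :
    Nat.card S = 1 := by
  obtain ⟨s₀⟩ := ‹Nonempty S›
  have hsurj : Function.Surjective (fun g : G => g • s₀) := fun s => by
    obtain ⟨g, hg⟩ := MulAction.exists_smul_eq G s₀ s
    exact ⟨g, hg⟩
  have hfin : Finite S := Finite.of_surjective _ hsurj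
  have hn0 : Nat.card S ≠ 0 := Nat.card_ne_zero.mpr ⟨‹_›, hfin⟩
  by_contra hne
  obtain ⟨p, hp, hpn⟩ := Nat.exists_prime_and_dvd hne
  have hdvd : Nat.card S ∣ Nat.card G := by
    rw [← MulAction.index_stabilizer_of_transitive G s₀]
    exact Subgroup.index_dvd_card _
  obtain ⟨s, P, hPs⟩ := h p hp (hpn.trans hdvd)
  haveI : Fact p.Prime := ⟨hp⟩
  have hnd : ¬ p ∣ P.index := P.not_dvd_index
  exact hnd (hpn.trans (by
    rw [← MulAction.index_stabilizer_of_transitive G s]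
    exact Subgroup.index_dvd_of_le hPs))

/-- If a finite group `G` acts on `Y` transitively permuting its irreducible components, and
for every prime `p ∣ |G|` some point lying on a unique irreducible component (a smooth point)
is fixed by a Sylow `p`-subgroup, then `Y` is irreducible. -/
theorem stmt15 (G : Type*) [Group G] [Finite G]
    (Y : Type*) [TopologicalSpace Y] [Nonempty Y]
    [MulAction G Y] (hcont : ∀ g : G, Continuous (fun y : Y => g • y))
    (htrans : ∀ C D : Set Y, C ∈ irreducibleComponents Y → D ∈ irreducibleComponents Y →
      ∃ g : G, (fun y => g • y) '' C = D)
    (hsmooth : ∀ p : ℕ, p.Prime → p ∣ Nat.card G →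
      ∃ (y : Y) (P : Sylow p G), (∀ g ∈ (P : Subgroup G), g • y = y) ∧
        ∃! C, C ∈ irreducibleComponents Y ∧ y ∈ C) :
    IrreducibleSpace Y := by
  letI S := {C : Set Y // C ∈ irreducibleComponents Y}
  letI : MulAction G S := compAction G Y hcont
  have hsmul : ∀ (g : G) (C : S), ((g • C : S) : Set Y) = (fun y => g • y) '' (C : Set Y) :=
    fun g C => rfl
  haveI : Nonempty S := ⟨⟨_, irreducibleComponent_mem_irreducibleComponents (Classical.arbitrary Y)⟩⟩
  haveI : MulAction.IsPretransitive G S := by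
    constructor
    intro C D
    obtain ⟨g, hg⟩ := htrans C.1 D.1 C.2 D.2
    exact ⟨g, Subtype.ext hg⟩
  have hcard : Nat.card S = 1 := by
    apply aux_card_one (G := G) (S := S)
    intro p hp hpd
    obtain ⟨y, P, hfix, C, ⟨hCmem, hyC⟩, hCuniq⟩ := hsmooth p hp hpd
    refine ⟨⟨C, hCmem⟩, P, fun g hg => ?_⟩
    have : ((g • (⟨C, hCmem⟩ : S) : S) : Set Y) = C := by
      apply hCuniq
      refine ⟨(g • (⟨C, hCmem⟩ : S)).2, ?_⟩
      rw [hsmul]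
      exact ⟨y, hyC, hfix g hg⟩
    exact Subtype.ext this
  haveI : Subsingleton S := Nat.card_eq_one_iff_unique.mp hcard |>.1
  obtain ⟨x₀⟩ := ‹Nonempty Y›
  have huniv : (Set.univ : Set Y) = irreducibleComponent x₀ := by
    apply Set.eq_of_subset_of_subset
    · intro x _
      have : (⟨irreducibleComponent x, irreducibleComponent_mem_irreducibleComponents x⟩ : S)
          = ⟨irreducibleComponent x₀, irreducibleComponent_mem_irreducibleComponents x₀⟩ :=
        Subsingleton.elim _ _
      have hx : x ∈ irreducibleComponent x := mem_irreducibleComponent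
      rwa [show irreducibleComponent x = irreducibleComponent x₀ from congrArg Subtype.val this] at hx
    · exact Set.subset_univ _
  refine { toNonempty := ‹_›, isPreirreducible_univ := ?_ }
  rw [huniv]
  exact isIrreducible_irreducibleComponent.2
end

section
/- Let p > 2 be a prime, P a non-abelian group of order p^3, ψ : P → GL(U) a faithful irreducible p-dimensional representation over an algebraically closed field k of characteristic ≠ p, and G = P × P acting on V = (U ⊗ U) ⊕ U via (ψ₁⊗ψ₂) ⊕ ψ₁, where ψ_i is ψ precomposed with the i-th projection. Then the only faithful G-subrepresentation of V is V itself, while G admits a faithful representation of dimension 2p. -/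
open TensorProduct

lemma aux_schur {k : Type*} [Field k] [IsAlgClosed k] {G : Type*} [Group G]
    {U : Type*} [AddCommGroup U] [Module k U] [FiniteDimensional k U]
    [Nontrivial U] (ψ : Representation k G U)
    (hψirr : ∀ W : Submodule k U, (∀ g : G, ∀ w ∈ W, ψ g w ∈ W) → W = ⊥ ∨ W = ⊤)
    (T : Module.End k U) (hT : ∀ g : G, T * ψ g = ψ g * T) :
    ∃ c : k, T = c • (1 : Module.End k U) := by
  obtain ⟨c, hc⟩ := Module.End.exists_eigenvalue T
  refine ⟨c, ?_⟩
  have hinv : ∀ g : G, ∀ w ∈ T.eigenspace c, ψ g w ∈ T.eigenspace c := by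
    intro g w hw
    rw [Module.End.mem_eigenspace_iff] at hw ⊢
    have := congrArg (fun f : Module.End k U => f w) (hT g)
    simp only [Module.End.mul_apply] at this
    rw [this, hw, map_smul]
  rcases hψirr _ hinv with h | h
  · exact absurd h hc
  · ext u
    have hu : u ∈ T.eigenspace c := h ▸ Submodule.mem_top
    rw [Module.End.mem_eigenspace_iff] at hu
    simpa using hu

lemma aux_tensor_commutant {k : Type*} [Field k] [IsAlgClosed k] {G : Type*} [Group G]
    {U : Type*} [AddCommGroup U] [Module k U] [FiniteDimensional k U]
    [Nontrivial U] (ψ : Representation k G U)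
    (hψirr : ∀ W : Submodule k U, (∀ g : G, ∀ w ∈ W, ψ g w ∈ W) → W = ⊥ ∨ W = ⊤)
    (T : Module.End k (TensorProduct k U U))
    (hT : ∀ g h : G, T * TensorProduct.map (ψ g) (ψ h) = TensorProduct.map (ψ g) (ψ h) * T) :
    ∃ c : k, T = c • (1 : Module.End k (TensorProduct k U U)) := by
  classical
  set n := Module.finrank k U with hn
  let b : Module.Basis (Fin n) k U := Module.finBasis k U
  have hnpos : 0 < n := Module.finrank_pos
  haveI : Nonempty (Fin n) := ⟨⟨0, hnpos⟩⟩
  let L : Fin n → (TensorProduct k U U →ₗ[k] U) := fun i =>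
    (TensorProduct.lid k U).toLinearMap ∘ₗ TensorProduct.map (b.coord i) LinearMap.id
  have hL : ∀ (i) (u v : U), L i (u ⊗ₜ[k] v) = b.coord i u • v := by
    intro i u v; simp [L]
  have hrecon : ∀ x : TensorProduct k U U, x = ∑ i, b i ⊗ₜ[k] (L i x) := by
    intro x
    induction x using TensorProduct.induction_on with
    | zero => simp
    | tmul u v =>
        simp only [hL]
        calc u ⊗ₜ[k] v = (∑ i, b.repr u i • b i) ⊗ₜ[k] v := by rw [b.sum_repr]
          _ = ∑ i, b i ⊗ₜ[k] (b.coord i u • v) := by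
              rw [TensorProduct.sum_tmul]
              refine Finset.sum_congr rfl fun i _ => ?_
              rw [Module.Basis.coord_apply, TensorProduct.smul_tmul]
    | add x y hx hy =>
        simp only [map_add, TensorProduct.tmul_add, Finset.sum_add_distrib]
        rw [← hx, ← hy]
  have hTij : ∀ i j : Fin n, ∃ c : k,
      (L i ∘ₗ (T ∘ₗ TensorProduct.mk k U U (b j))) = c • (1 : Module.End k U) := by
    intro i j
    apply aux_schur ψ hψirr
    intro g
    ext v
    simp only [Module.End.mul_apply, LinearMap.comp_apply, TensorProduct.mk_apply]
    have h1 : b j ⊗ₜ[k] (ψ g v) = TensorProduct.map (ψ 1) (ψ g) (b j ⊗ₜ[k] v) := by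
      simp
    rw [h1]
    have h2 := congrArg (fun f : Module.End k (TensorProduct k U U) => f (b j ⊗ₜ[k] v)) (hT 1 g)
    simp only [Module.End.mul_apply] at h2
    rw [h2]
    generalize T (b j ⊗ₜ[k] v) = y
    induction y using TensorProduct.induction_on with
    | zero => simp
    | tmul u w => simp [hL]
    | add x y hx hy => simp only [map_add, hx, hy]
  choose c hc using hTij
  have hTb : ∀ (j : Fin n) (v : U), T (b j ⊗ₜ[k] v) = ∑ i, c i j • (b i ⊗ₜ[k] v) := by
    intro j v
    calc T (b j ⊗ₜ[k] v) = ∑ i, b i ⊗ₜ[k] (L i (T (b j ⊗ₜ[k] v))) := hrecon _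
      _ = ∑ i, c i j • (b i ⊗ₜ[k] v) := by
          refine Finset.sum_congr rfl fun i _ => ?_
          have h3 := congrArg (fun f : Module.End k U => f v) (hc i j)
          simp only [LinearMap.smul_apply, Module.End.one_apply, LinearMap.comp_apply,
            TensorProduct.mk_apply] at h3
          rw [h3, TensorProduct.tmul_smul]
  let M : Module.End k U := ∑ i, ∑ j, c i j • (LinearMap.toSpanSingleton k U (b i) ∘ₗ b.coord j)
  have hM : ∀ u v : U, T (u ⊗ₜ[k] v) = (M u) ⊗ₜ[k] v := by
    intro u v
    have h1 : u ⊗ₜ[k] v = ∑ j, b.repr u j • (b j ⊗ₜ[k] v) := by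
      calc u ⊗ₜ[k] v = (∑ j, b.repr u j • b j) ⊗ₜ[k] v := by rw [b.sum_repr]
        _ = ∑ j, b.repr u j • (b j ⊗ₜ[k] v) := by
            rw [TensorProduct.sum_tmul]
            exact Finset.sum_congr rfl fun j _ => by rw [TensorProduct.smul_tmul']
    have h2 : (M u) ⊗ₜ[k] v = ∑ i, ∑ j, (c i j * b.repr u j) • (b i ⊗ₜ[k] v) := by
      have hMu : M u = ∑ i, ∑ j, (c i j * b.repr u j) • b i := by
        simp [M, LinearMap.sum_apply, LinearMap.smul_apply, LinearMap.comp_apply,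
          LinearMap.toSpanSingleton_apply, Module.Basis.coord_apply, smul_smul]
      rw [hMu, TensorProduct.sum_tmul]
      refine Finset.sum_congr rfl fun i _ => ?_
      rw [TensorProduct.sum_tmul]
      exact Finset.sum_congr rfl fun j _ => by rw [TensorProduct.smul_tmul']
    have h3 : T (u ⊗ₜ[k] v) = ∑ j, ∑ i, (b.repr u j * c i j) • (b i ⊗ₜ[k] v) := by
      rw [h1, map_sum]
      refine Finset.sum_congr rfl fun j _ => ?_
      rw [map_smul, hTb, Finset.smul_sum]
      exact Finset.sum_congr rfl fun i _ => by rw [smul_smul]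
    rw [h3, h2, Finset.sum_comm]
    exact Finset.sum_congr rfl fun i _ => Finset.sum_congr rfl fun j _ => by rw [mul_comm]
  have hMcomm : ∀ g : G, M * ψ g = ψ g * M := by
    intro g
    obtain ⟨i0⟩ := (inferInstance : Nonempty (Fin n))
    ext u
    simp only [Module.End.mul_apply]
    have h2 := congrArg (fun f : Module.End k (TensorProduct k U U) => f (u ⊗ₜ[k] b i0)) (hT g 1)
    simp only [Module.End.mul_apply] at h2
    have e1 : TensorProduct.map (ψ g) (ψ 1) (u ⊗ₜ[k] b i0) = (ψ g u) ⊗ₜ[k] b i0 := by simp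
    rw [e1, hM, hM] at h2
    rw [TensorProduct.map_tmul] at h2
    have e2 : (ψ (1:G)) (b i0) = b i0 := by simp
    rw [e2] at h2
    -- h2 : M (ψ g u) ⊗ₜ b i0 = ψ g (M u) ⊗ₜ b i0
    have h4 := congrArg (fun x => (TensorProduct.rid k U) (TensorProduct.map LinearMap.id (b.coord i0) x)) h2
    simpa [Module.Basis.coord_apply, Module.Basis.repr_self] using h4
  obtain ⟨c0, hc0⟩ := aux_schur ψ hψirr M hMcomm
  refine ⟨c0, ?_⟩
  apply TensorProduct.ext'
  intro u v
  have hMu : M u = c0 • u := by rw [hc0]; simp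
  rw [hM, hMu]
  simp [TensorProduct.smul_tmul']

lemma aux_avg {k : Type*} [Field k] {V : Type*} [AddCommGroup V] [Module k V]
    {G : Type*} [Group G] [Fintype G]
    (τ : G →* Module.End k V) (hcard : ((Fintype.card G : ℕ) : k) ≠ 0)
    (hcomm : ∀ T : Module.End k V, (∀ g, T * τ g = τ g * T) → ∃ c : k, T = c • 1)
    (W : Submodule k V) (hWinv : ∀ g, ∀ x ∈ W, τ g x ∈ W) (hW0 : W ≠ ⊥) : W = ⊤ := by
  classical
  obtain ⟨W', hW'⟩ := Submodule.exists_isCompl W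
  set q : V →ₗ[k] V := W.subtype ∘ₗ W.projectionOnto W' hW' with hq
  have hqmem : ∀ x, q x ∈ W := fun x => (W.projectionOnto W' hW' x).2
  have hqid : ∀ x ∈ W, q x = x := by
    intro x hx
    have h := Submodule.linearProjOfIsCompl_apply_left hW' ⟨x, hx⟩
    simp only [hq, LinearMap.comp_apply]
    rw [show (⟨x, hx⟩ : W).1 = x from rfl] at h
    rw [h]; rfl
  set S : Module.End k V := ∑ g : G, τ g * q * τ g⁻¹ with hS
  have hSmem : ∀ x, S x ∈ W := by
    intro x
    rw [hS]
    simp only [LinearMap.sum_apply, Module.End.mul_apply]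
    exact Submodule.sum_mem W fun g _ => hWinv g _ (hqmem _)
  have hSW : ∀ x ∈ W, S x = ((Fintype.card G : ℕ) : k) • x := by
    intro x hx
    rw [hS]
    simp only [LinearMap.sum_apply, Module.End.mul_apply]
    have h1 : ∀ g : G, τ g (q (τ g⁻¹ x)) = x := by
      intro g
      rw [hqid _ (hWinv g⁻¹ x hx)]
      have h2 : τ g * τ g⁻¹ = 1 := by rw [← map_mul, mul_inv_cancel, map_one]
      calc τ g (τ g⁻¹ x) = (τ g * τ g⁻¹) x := rfl
        _ = x := by rw [h2]; rfl
    rw [Finset.sum_congr rfl fun g _ => h1 g, Finset.sum_const, Finset.card_univ,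
      Nat.cast_smul_eq_nsmul]
  have hScomm : ∀ h : G, S * τ h = τ h * S := by
    intro h
    rw [hS, Finset.sum_mul, Finset.mul_sum]
    refine (Fintype.sum_equiv (Equiv.mulLeft h)
      (fun g => τ h * (τ g * q * τ g⁻¹)) (fun g => (τ g * q * τ g⁻¹) * τ h) ?_).symm
    intro g
    have e1 : τ (h * g) = τ h * τ g := map_mul τ h g
    have e2 : τ (h * g)⁻¹ * τ h = τ g⁻¹ := by
      rw [← map_mul]; congr 1; group
    show τ h * (τ g * q * τ g⁻¹) = (τ (Equiv.mulLeft h g) * q * τ (Equiv.mulLeft h g)⁻¹) * τ h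
    simp only [Equiv.coe_mulLeft]
    rw [e1]
    simp only [mul_assoc]
    rw [e2]
  obtain ⟨c, hcS⟩ := hcomm S hScomm
  obtain ⟨w, hwW, hw0⟩ := Submodule.ne_bot_iff W |>.mp hW0
  have hcval : c = ((Fintype.card G : ℕ) : k) := by
    have h1 : c • w = ((Fintype.card G : ℕ) : k) • w := by
      rw [← hSW w hwW, hcS]; simp
    have h2 : (c - ((Fintype.card G : ℕ) : k)) • w = 0 := by
      rw [sub_smul, h1, sub_self]
    rcases smul_eq_zero.mp h2 with h | h
    · exact sub_eq_zero.mp h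
    · exact absurd h hw0
  rw [Submodule.eq_top_iff']
  intro x
  have h3 : S x = ((Fintype.card G : ℕ) : k) • x := by rw [hcS, hcval]; simp
  have hmem := hSmem x
  rw [h3] at hmem
  have h4 := W.smul_mem (((Fintype.card G : ℕ) : k))⁻¹ hmem
  rwa [smul_smul, inv_mul_cancel₀ hcard, one_smul] at h4


/-- Example 5.2: for `G = P × P` acting on `(U ⊗ U) ⊕ U` via `(ψ₁ ⊗ ψ₂) ⊕ ψ₁`, the only
faithful subrepresentation is the whole space, while `G` has a faithful representation
(namely `ψ₁ ⊕ ψ₂`) of dimension `2p`. -/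
theorem stmt17 (k : Type*) [Field k] [IsAlgClosed k] (p : ℕ) [Fact p.Prime] (hp : 2 < p)
    (hchark : (p : k) ≠ 0)
    (P : Type*) [Group P] [Finite P] (hcard : Nat.card P = p ^ 3)
    (hnab : ∃ a b : P, a * b ≠ b * a)
    (U : Type*) [AddCommGroup U] [Module k U] [FiniteDimensional k U]
    (hU : Module.finrank k U = p)
    (ψ : Representation k P U) (hψf : Function.Injective ψ)
    (hψirr : ∀ W : Submodule k U, (∀ g : P, ∀ w ∈ W, ψ g w ∈ W) → W = ⊥ ∨ W = ⊤)
    (ρ : Representation k (P × P) (TensorProduct k U U × U))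
    (hρ : ∀ (g : P × P) (u v w : U),
      ρ g (u ⊗ₜ[k] v, w) = (ψ g.1 u ⊗ₜ[k] ψ g.2 v, ψ g.1 w)) :
    (∀ W : Submodule k (TensorProduct k U U × U),
      (∀ g : P × P, ∀ x ∈ W, ρ g x ∈ W) →
      (∀ g : P × P, (∀ x ∈ W, ρ g x = x) → g = 1) → W = ⊤) ∧
    Function.Injective (fun g : P × P => LinearMap.prodMap (ψ g.1) (ψ g.2)) ∧
    Module.finrank k (U × U) = 2 * p := by
  classical
  have hppos : 0 < p := (Fact.out : p.Prime).pos
  haveI hNU : Nontrivial U := by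
    have h0 : 0 < Module.finrank k U := hU ▸ hppos
    exact Module.nontrivial_of_finrank_pos h0
  haveI := Fintype.ofFinite P
  haveI hPnt : Nontrivial P := by
    rw [← Finite.one_lt_card_iff_nontrivial, hcard]
    exact Nat.one_lt_pow (by norm_num) (lt_trans one_lt_two hp)
  have hpg : IsPGroup p P := IsPGroup.of_card hcard
  haveI := hpg.center_nontrivial
  obtain ⟨z', hz'⟩ := exists_ne (1 : Subgroup.center P)
  have hzne : (z' : P) ≠ 1 := by
    intro h
    exact hz' (Subtype.ext h)
  have hzc : ∀ g : P, g * (z' : P) = (z' : P) * g := fun g =>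
    Subgroup.mem_center_iff.mp z'.2 g
  have hcommz : ∀ g : P, ψ (z' : P) * ψ g = ψ g * ψ (z' : P) := by
    intro g
    rw [← map_mul, ← map_mul, ← hzc g]
  obtain ⟨lam, hlam⟩ := aux_schur ψ hψirr (ψ (z' : P)) hcommz
  have hlam_apply : ∀ u : U, ψ (z' : P) u = lam • u := by
    intro u; rw [hlam]; simp
  have hlam1 : lam ≠ 1 := by
    intro h
    apply hzne
    apply hψf
    rw [hlam, h, one_smul, map_one]
  have hinvz : ∀ u : U, ψ ((z' : P)⁻¹) (ψ (z' : P) u) = u := by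
    intro u
    have : ψ ((z' : P)⁻¹) * ψ (z' : P) = 1 := by
      rw [← map_mul, inv_mul_cancel, map_one]
    calc ψ ((z' : P)⁻¹) (ψ (z' : P) u) = (ψ ((z' : P)⁻¹) * ψ (z' : P)) u := rfl
      _ = u := by rw [this]; rfl
  have hlam0 : lam ≠ 0 := by
    intro h
    obtain ⟨u, hu⟩ := exists_ne (0 : U)
    have h1 := hinvz u
    rw [hlam_apply, h, zero_smul, map_zero] at h1
    exact hu h1.symm
  have hlaminv : ∀ u : U, ψ ((z' : P)⁻¹) u = lam⁻¹ • u := by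
    intro u
    have h1 := hinvz u
    rw [hlam_apply, map_smul] at h1
    calc ψ ((z' : P)⁻¹) u = lam⁻¹ • (lam • ψ ((z' : P)⁻¹) u) := by
          rw [smul_smul, inv_mul_cancel₀ hlam0, one_smul]
      _ = lam⁻¹ • u := by rw [h1]
  -- the tensor action as a monoid hom
  let τ : (P × P) →* Module.End k (TensorProduct k U U) :=
    { toFun := fun g => TensorProduct.map (ψ g.1) (ψ g.2)
      map_one' := by
        apply TensorProduct.ext'
        intro u v
        simp
      map_mul' := by
        intro g h
        apply TensorProduct.ext'
        intro u v
        simp [TensorProduct.map_tmul] }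
  have hτ : ∀ (g : P × P) (u v : U), τ g (u ⊗ₜ[k] v) = (ψ g.1 u) ⊗ₜ[k] (ψ g.2 v) :=
    fun g u v => TensorProduct.map_tmul (ψ g.1) (ψ g.2) u v
  have hρ1 : ∀ (g : P × P) (t : TensorProduct k U U), ρ g (t, (0 : U)) = (τ g t, 0) := by
    intro g t
    induction t using TensorProduct.induction_on with
    | zero =>
        have h := hρ g 0 0 0
        simpa using h
    | tmul u v =>
        have h := hρ g u v 0
        rw [hτ]
        simpa using h
    | add x y hx hy =>
        have h : ((x + y : TensorProduct k U U), (0:U)) = (x, (0:U)) + (y, 0) := by simp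
        rw [h, map_add, hx, hy, map_add]
        simp
  have hρ2 : ∀ (g : P × P) (w : U), ρ g (0, w) = (0, ψ g.1 w) := by
    intro g w
    have h := hρ g 0 0 w
    simpa using h
  have hρ3 : ∀ (g : P × P) (t : TensorProduct k U U) (w : U),
      ρ g (t, w) = (τ g t, ψ g.1 w) := by
    intro g t w
    have h : ((t, w) : TensorProduct k U U × U) = (t, 0) + (0, w) := by simp
    rw [h, map_add, hρ1, hρ2]
    simp
  have hτ1z : ∀ t : TensorProduct k U U, τ ((1 : P), (z' : P)) t = lam • t := by
    intro t
    induction t using TensorProduct.induction_on with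
    | zero => simp
    | tmul u v =>
        rw [hτ]
        show (ψ (1:P)) u ⊗ₜ[k] (ψ (z' : P)) v = lam • u ⊗ₜ[k] v
        rw [map_one, hlam_apply]
        simp [TensorProduct.tmul_smul]
    | add x y hx hy => rw [map_add, hx, hy, smul_add]
  have hτzz : ∀ t : TensorProduct k U U, τ ((z' : P), (z' : P)⁻¹) t = t := by
    intro t
    induction t using TensorProduct.induction_on with
    | zero => simp
    | tmul u v =>
        rw [hτ]
        show (ψ (z' : P)) u ⊗ₜ[k] (ψ ((z' : P)⁻¹)) v = u ⊗ₜ[k] v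
        rw [hlam_apply, hlaminv, TensorProduct.smul_tmul, TensorProduct.tmul_smul,
          TensorProduct.tmul_smul, smul_smul, mul_inv_cancel₀ hlam0, one_smul]
    | add x y hx hy => rw [map_add, hx, hy]
  refine ⟨?_, ?_, ?_⟩
  · intro W hWinv hWfaith
    set W0 : Submodule k (TensorProduct k U U) :=
      W.comap (LinearMap.inl k (TensorProduct k U U) U) with hW0def
    have hW0mem : ∀ t : TensorProduct k U U, t ∈ W0 ↔ (t, (0:U)) ∈ W := by
      intro t
      rw [hW0def, Submodule.mem_comap, LinearMap.inl_apply]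
    have hW0inv : ∀ g : P × P, ∀ t ∈ W0, τ g t ∈ W0 := by
      intro g t ht
      have h := hWinv g _ ((hW0mem t).mp ht)
      rw [hρ1] at h
      exact (hW0mem _).mpr h
    by_cases hW0bot : W0 = ⊥
    · exfalso
      have hfst : ∀ x ∈ W, x.1 = (0 : TensorProduct k U U) := by
        intro x hx
        have h1 : ρ ((1 : P), (z' : P)) x ∈ W := hWinv _ _ hx
        have h2 : ρ ((1 : P), (z' : P)) x = (lam • x.1, x.2) := by
          rw [show x = (x.1, x.2) from rfl, hρ3, hτ1z, map_one]
          rfl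
        have h3 : ρ ((1 : P), (z' : P)) x - x ∈ W := W.sub_mem h1 hx
        rw [h2] at h3
        have h4 : ((lam • x.1, x.2) : TensorProduct k U U × U) - x
            = ((lam - 1) • x.1, 0) := by
          rw [show x = (x.1, x.2) from rfl, Prod.mk_sub_mk, sub_smul, one_smul, sub_self]
        rw [h4] at h3
        have h5 : (lam - 1) • x.1 ∈ W0 := (hW0mem _).mpr h3
        rw [hW0bot, Submodule.mem_bot] at h5
        rcases smul_eq_zero.mp h5 with h | h
        · exact absurd (sub_eq_zero.mp h) hlam1
        · exact h
      have h6 : ((1 : P), (z' : P)) = (1 : P × P) := by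
        apply hWfaith
        intro x hx
        rw [show x = (x.1, x.2) from rfl, hρ3, hτ1z, hfst x hx, smul_zero, map_one]
        rfl
      exact hzne (congrArg Prod.snd h6)
    · have hcardk : ((Fintype.card (P × P) : ℕ) : k) ≠ 0 := by
        have h1 : Fintype.card (P × P) = p ^ 3 * p ^ 3 := by
          rw [Fintype.card_prod, ← Nat.card_eq_fintype_card, hcard]
        rw [h1]
        push_cast
        exact mul_ne_zero (pow_ne_zero _ hchark) (pow_ne_zero _ hchark)
      have hW0top : W0 = ⊤ := by
        refine aux_avg τ hcardk ?_ W0 hW0inv hW0bot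
        intro T hT
        exact aux_tensor_commutant ψ hψirr T (fun g h => hT (g, h))
      have hW2inv : ∀ g : P, ∀ w ∈ W.map (LinearMap.snd k (TensorProduct k U U) U),
          ψ g w ∈ W.map (LinearMap.snd k (TensorProduct k U U) U) := by
        intro g w hw
        obtain ⟨x, hx, rfl⟩ := hw
        refine ⟨ρ (g, 1) x, hWinv _ _ hx, ?_⟩
        rw [show x = (x.1, x.2) from rfl, hρ3]
        rfl
      rcases hψirr _ hW2inv with h2bot | h2top
      · exfalso
        have hsnd0 : ∀ x ∈ W, x.2 = (0 : U) := by
          intro x hx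
          have h : x.2 ∈ W.map (LinearMap.snd k (TensorProduct k U U) U) := ⟨x, hx, rfl⟩
          rw [h2bot, Submodule.mem_bot] at h
          exact h
        have h6 : ((z' : P), (z' : P)⁻¹) = (1 : P × P) := by
          apply hWfaith
          intro x hx
          rw [show x = (x.1, x.2) from rfl, hρ3, hτzz, hsnd0 x hx, map_zero]
        exact hzne (congrArg Prod.fst h6)
      · rw [Submodule.eq_top_iff']
        intro x
        have hx2 : x.2 ∈ W.map (LinearMap.snd k (TensorProduct k U U) U) :=
          h2top ▸ Submodule.mem_top
        obtain ⟨y, hyW, hy2⟩ := hx2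
        have h1 : ((x.1 - y.1, 0) : TensorProduct k U U × U) ∈ W :=
          (hW0mem _).mp (hW0top ▸ Submodule.mem_top)
        have h2 : y + ((x.1 - y.1, (0:U)) : TensorProduct k U U × U) = x := by
          have hy2' : y.2 = x.2 := hy2
          refine Prod.ext ?_ ?_
          · show y.1 + (x.1 - y.1) = x.1
            abel
          · show y.2 + 0 = x.2
            rw [add_zero, hy2']
        rw [← h2]
        exact W.add_mem hyW h1
  · intro g h hgh
    have h1 : ψ g.1 = ψ h.1 := by
      ext u
      have := congrArg (fun f : U × U →ₗ[k] U × U => (f (u, 0)).1) hgh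
      simpa using this
    have h2 : ψ g.2 = ψ h.2 := by
      ext u
      have := congrArg (fun f : U × U →ₗ[k] U × U => (f (0, u)).2) hgh
      simpa using this
    exact Prod.ext (hψf h1) (hψf h2)
  · rw [Module.finrank_prod, hU, two_mul]
end
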